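/- Let H be a Heyting algebra and w ∈ H. Then w is widespread if and only if for every v ∈ H one has ⊤ ≤ v ⊔ (v ⇨ w). -/

import Mathlib

open CategoryTheory Opposite

universe w v u

namespace PaperEtendue

/-- An element `w` of a Heyting algebra is *widespread* if the lattice of elements
above `w` is complemented. -/
def Widespread {H : Type u} [HeytingAlgebra H] (w : H) : Prop :=
  ∀ v : H, w ≤ v → ∃ v' : H, w ≤ v' ∧ v ⊔ v' = ⊤ ∧ v ⊓ v' = w

/-- An object is *minimal* if every morphism with that domain is a monomorphism. -/
def Minimal {C : Type u} [Category.{v} C] (c : C) : Prop :=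
  ∀ ⦃d : C⦄ (f : c ⟶ d), Mono f

/-- An object is *preterminal* if there is at most one morphism into it from any object. -/
def Preterminal {C : Type u} [Category.{v} C] (c : C) : Prop :=
  ∀ ⦃b : C⦄ (u v : b ⟶ c), u = v

/-- The category of elements `C/X` of a presheaf `X`: objects are pairs `(x, D)`
with `x ∈ X(D)`. -/
structure Elem {C : Type u} [Category.{v} C] (X : Cᵒᵖ ⥤ Type w) : Type max u w where
  base : C
  elt : X.obj (op base)

/-- Morphisms `(x, D) → (y, E)` in `C/X` are morphisms `f : D → E` of `C` with
`X(f)(y) = x`. -/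
instance {C : Type u} [Category.{v} C] (X : Cᵒᵖ ⥤ Type w) : Category (Elem X) where
  Hom a b := {f : a.base ⟶ b.base // X.map f.op b.elt = a.elt}
  id a := ⟨𝟙 a.base, by simp⟩
  comp {a b c} f g := ⟨f.1 ≫ g.1, by
    rw [op_comp, FunctorToTypes.map_comp_apply, g.2, f.2]⟩
  id_comp f := Subtype.ext (Category.id_comp f.1)
  comp_id f := Subtype.ext (Category.comp_id f.1)
  assoc f g h := Subtype.ext (Category.assoc f.1 g.1 h.1)

/-- A presheaf is *strongly regular* if for every monomorphism of `C/X`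
with minimal codomain, the domain is also minimal. -/
def StronglyRegular {C : Type u} [Category.{v} C] (X : Cᵒᵖ ⥤ Type w) : Prop :=
  ∀ ⦃a b : Elem X⦄ (m : a ⟶ b), Mono m → Minimal b → Minimal a

/-- A presheaf is *non-singular* if every minimal object of `C/X` is preterminal. -/
def NonSingular {C : Type u} [Category.{v} C] (X : Cᵒᵖ ⥤ Type w) : Prop :=
  ∀ a : Elem X, Minimal a → Preterminal a

/-- Every morphism factors as a split epimorphism followed by a monomorphism. -/
def SplitEpiMonoFact (C : Type u) [Category.{v} C] : Prop :=
  ∀ ⦃a b : C⦄ (f : a ⟶ b), ∃ (c : C) (e : a ⟶ c) (m : c ⟶ b),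
    IsSplitEpi e ∧ Mono m ∧ e ≫ m = f

/-- Every morphism factors as a strong epimorphism followed by a monomorphism. -/
def StrongEpiMonoFact (C : Type u) [Category.{v} C] : Prop :=
  ∀ ⦃a b : C⦄ (f : a ⟶ b), ∃ (c : C) (e : a ⟶ c) (m : c ⟶ b),
    StrongEpi e ∧ Mono m ∧ e ≫ m = f

/-- The ascending chain condition: every `ℕ`-indexed chain of monomorphisms lying
over a fixed object via compatible monomorphisms contains an isomorphism. -/
def AscendingChainCondition (C : Type u) [Category.{v} C] : Prop :=
  ∀ (obj : ℕ → C) (c : C) (m : ∀ k : ℕ, obj k ⟶ obj (k + 1)) (i : ∀ k : ℕ, obj k ⟶ c),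
    (∀ k, Mono (m k)) → (∀ k, Mono (i k)) → (∀ k, m k ≫ i (k + 1) = i k) →
    ∃ t : ℕ, IsIso (m t)

/-- A category is *well-founded* if every `ℕ`-indexed chain of strong epimorphisms
is eventually constant. -/
def WellFoundedCat (C : Type u) [Category.{v} C] : Prop :=
  ∀ (obj : ℕ → C) (e : ∀ k : ℕ, obj k ⟶ obj (k + 1)),
    (∀ k, StrongEpi (e k)) → ∃ k : ℕ, ∀ m : ℕ, k ≤ m → IsIso (e m)

/-- `𝔥 c ≤ n`: in every sequence of `n+1` composable monomorphisms ending at `c`,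
at least one is an isomorphism. -/
def HeightLE {C : Type u} [Category.{v} C] (c : C) (n : ℕ) : Prop :=
  ∀ (obj : Fin (n + 2) → C) (f : ∀ i : Fin (n + 1), obj i.succ ⟶ obj i.castSucc),
    (∀ i, Mono (f i)) → obj 0 = c → ∃ i, IsIso (f i)

/-- Every sequence of `n+1` composable morphisms in `C` contains an isomorphism. -/
def ChainsContainIso (C : Type u) [Category.{v} C] (n : ℕ) : Prop :=
  ∀ (obj : Fin (n + 2) → C) (f : ∀ i : Fin (n + 1), obj i.succ ⟶ obj i.castSucc),
    ∃ i, IsIso (f i)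

/-- The full subcategory of `C/X` determined by the minimal objects. -/
abbrev MinimalElems {C : Type u} [Category.{v} C] (X : Cᵒᵖ ⥤ Type w) :=
  ObjectProperty.FullSubcategory (fun a : Elem X => Minimal a)

/-- A morphism factors through an object of height below `n`. -/
def FactorsThroughHeightLE {C : Type u} [Category.{v} C] {a b : C} (f : a ⟶ b) (n : ℕ) : Prop :=
  ∃ (c : C) (v : a ⟶ c) (u : c ⟶ b), HeightLE c n ∧ v ≫ u = f

/-- `dim X ≤ n`: every element of `X` is the restriction of an element along a morphism
factoring through an object of height below `n` (i.e. `X` is `n`-skeletal). -/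
def DimLE {C : Type u} [Category.{v} C] (X : Cᵒᵖ ⥤ Type w) (n : ℕ) : Prop :=
  ∀ (D : C) (x : X.obj (op D)), ∃ (E : C) (f : D ⟶ E) (y : X.obj (op E)),
    FactorsThroughHeightLE f n ∧ X.map f.op y = x

/-- A two-sided ideal of morphisms of a category. -/
def IsIdeal {C : Type u} [Category.{v} C] (I : MorphismProperty C) : Prop :=
  ∀ ⦃a b c d : C⦄ (h : a ⟶ b) (f : b ⟶ c) (g : c ⟶ d), I f → I (h ≫ f ≫ g)

/-- An idempotent ideal: every member factors as a composite of two members. -/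
def IsIdempotentIdeal {C : Type u} [Category.{v} C] (I : MorphismProperty C) : Prop :=
  IsIdeal I ∧ ∀ ⦃a b : C⦄ (f : a ⟶ b), I f →
    ∃ (c : C) (h : a ⟶ c) (g : c ⟶ b), I h ∧ I g ∧ h ≫ g = f

/-- The implication sieve `V ⇒ W`. -/
def sieveImp {C : Type u} [Category.{v} C] {D : C} (V W : Sieve D) : Sieve D where
  arrows F h := ∀ ⦃G : C⦄ (g : G ⟶ F), V.arrows (g ≫ h) → W.arrows (g ≫ h)
  downward_closed := by
    intro F F' h hh g G' g' hv
    have := hh (g' ≫ g) (by simpa using hv)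
    simpa using this

/-- `W` is a subpresheaf of `X` given as a family of subsets closed under the action. -/
def IsSubpresheaf {C : Type u} [Category.{v} C] (X : Cᵒᵖ ⥤ Type w)
    (W : ∀ D : Cᵒᵖ, Set (X.obj D)) : Prop :=
  ∀ ⦃D E : Cᵒᵖ⦄ (f : D ⟶ E) ⦃x : X.obj D⦄, x ∈ W D → X.map f x ∈ W E

/-- The implication subpresheaf `(V ⇒ W)(D)`. -/
def impSet {C : Type u} [Category.{v} C] (X : Cᵒᵖ ⥤ Type w)
    (V W : ∀ D : Cᵒᵖ, Set (X.obj D)) (D : Cᵒᵖ) : Set (X.obj D) :=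
  {x | ∀ ⦃E : Cᵒᵖ⦄ (f : D ⟶ E), X.map f x ∈ V E → X.map f x ∈ W E}

/-- `Ξ_k`: the image subpresheaf of the map `C(-, K) → X` corresponding to `k`. -/
def xiSet {C : Type u} [Category.{v} C] (X : Cᵒᵖ ⥤ Type w) {K : C} (k : X.obj (op K))
    (J : Cᵒᵖ) : Set (X.obj J) :=
  {j | ∃ g : op K ⟶ J, X.map g k = j}

theorem widespread_iff_sup_himp_eq_top {H : Type u} [HeytingAlgebra H] (w : H) :
    Widespread w ↔ ∀ v : H, ⊤ ≤ v ⊔ (v ⇨ w) := by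
  constructor
  · intro hw v
    obtain ⟨v', hwv', htop, hinf⟩ := hw (w ⊔ v) le_sup_left
    have h1 : v' ≤ v ⇨ w := le_himp_iff.mpr (by
      calc v' ⊓ v ≤ (w ⊔ v) ⊓ v' := by
            rw [inf_comm]; exact inf_le_inf_right _ le_sup_right
        _ = w := hinf)
    calc (⊤ : H) = (w ⊔ v) ⊔ v' := htop.symm
      _ ≤ v ⊔ (v ⇨ w) := by
          apply sup_le (sup_le _ le_sup_left) (h1.trans le_sup_right)
          exact le_sup_of_le_right (le_himp_iff.mpr inf_le_left)
  · intro h v hwv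
    refine ⟨v ⇨ w, le_himp_iff.mpr inf_le_left, top_le_iff.mp (h v), ?_⟩
    rw [inf_himp, inf_eq_right.mpr hwv]

end PaperEtendue
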